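/- Assume K is both a ℚ-algebra and an integral domain, let χ = (χ_d)_{d≥1} be an ω-invariant sequence of characters, and let E be a free K-module with finite basis (e_ℓ)_{ℓ=1}^n. Then: (i) the family (e_j), where j runs over J(χ,n) = ∪_{d≥0} J(χ_d,n,d) (with e_∅ = 1 in degree 0), is a basis of the K-module [χ](E); (ii) for j ∈ J(χ_d,n,d) and k ∈ J(χ_e,n,e), the multiplication of the algebra [χ](E) satisfies e_j·e_k = 0 if the concatenated multi-index (j,k) ∈ [1,n]^{d+e} lies in I₀(χ_{d+e},n,d+e), and e_j·e_k = ζ(j,k)·e_{ℓm(j,k)} if (j,k) ∈ I(χ_{d+e},n,d+e). -/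

import Mathlib

noncomputable section

open scoped TensorProduct DirectSum

/-- The subgroup of permutations of `ℕ` fixing every `n ≥ d`
(the symmetric group `S_d` inside `S_∞`, in 0-indexed form). -/
def Sfin (d : ℕ) : Subgroup (Equiv.Perm ℕ) where
  carrier := {σ | ∀ n, d ≤ n → σ n = n}
  one_mem' := fun _ _ => rfl
  mul_mem' := by
    intro a b ha hb n hn
    simp only [Equiv.Perm.mul_apply]
    rw [hb n hn, ha n hn]
  inv_mem' := by
    intro a ha n hn
    have h1 : a n = n := ha n hn
    calc a⁻¹ n = a⁻¹ (a n) := by rw [h1]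
    _ = n := Equiv.symm_apply_apply a n

/-- The shift `ω` of a finitary permutation of `ℕ`:
`(ω σ) 0 = 0` and `(ω σ) (m+1) = σ m + 1`. -/
def omegaPerm (σ : Equiv.Perm ℕ) : Equiv.Perm ℕ where
  toFun := fun n => match n with
    | 0 => 0
    | m + 1 => σ m + 1
  invFun := fun n => match n with
    | 0 => 0
    | m + 1 => σ⁻¹ m + 1
  left_inv := by
    intro n
    cases n with
    | zero => rfl
    | succ m => simp
  right_inv := by
    intro n
    cases n with
    | zero => rfl
    | succ m => simp

/-- `ω` as an (injective) monoid endomorphism of `S_∞`. -/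
def omegaHom : Equiv.Perm ℕ →* Equiv.Perm ℕ where
  toFun := omegaPerm
  map_one' := by
    ext n
    cases n <;> rfl
  map_mul' := by
    intro a b
    ext n
    cases n <;> rfl

/-- An `ω`-invariant sequence of `K`-valued linear characters
`χ_d : W_d → U(K)` on an `ω`-stable sequence of permutation groups
`W_d ≤ S_d` (indexed over all `d : ℕ`, 0-indexed). -/
structure OmegaSeq (K : Type*) [CommRing K] where
  W : ℕ → Subgroup (Equiv.Perm ℕ)
  W_le : ∀ d, W d ≤ Sfin d
  mono : ∀ d, W d ≤ W (d + 1)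
  omega_mem : ∀ d, ∀ σ ∈ W d, omegaHom σ ∈ W (d + 1)
  χ : ∀ d, W d →* Kˣ
  χ_res : ∀ d (σ : Equiv.Perm ℕ) (h : σ ∈ W d),
    χ (d + 1) ⟨σ, mono d h⟩ = χ d ⟨σ, h⟩
  χ_omega : ∀ d (σ : Equiv.Perm ℕ) (h : σ ∈ W d),
    χ (d + 1) ⟨omegaHom σ, omega_mem d σ h⟩ = χ d ⟨σ, h⟩

lemma Sfin.apply_lt {d : ℕ} {σ : Equiv.Perm ℕ} (h : σ ∈ Sfin d) {x : ℕ}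
    (hx : x < d) : σ x < d := by
  have h' : ∀ n, d ≤ n → σ n = n := h
  by_contra hge
  push_neg at hge
  have h1 : σ (σ x) = σ x := h' (σ x) hge
  have h2 : σ x = x := σ.injective h1
  rw [h2] at hge
  omega

/-- The restriction of a permutation `σ ∈ S_d ≤ S_∞` to a permutation
of `Fin d`. -/
def restrictFin {d : ℕ} (σ : Equiv.Perm ℕ) (h : σ ∈ Sfin d) :
    Equiv.Perm (Fin d) where
  toFun x := ⟨σ x, Sfin.apply_lt h x.2⟩
  invFun x := ⟨σ⁻¹ x, Sfin.apply_lt (inv_mem h) x.2⟩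
  left_inv x := by
    ext
    simp
  right_inv x := by
    ext
    simp

/-- The action of a permutation `σ` of `Fin d` on the `d`-th tensor power
`T^d(E)`, determined by `σ • (x₁ ⊗ ⋯ ⊗ x_d) = x_{σ⁻¹(1)} ⊗ ⋯ ⊗ x_{σ⁻¹(d)}`. -/
def permAct (K : Type*) [CommRing K] (E : Type*) [AddCommGroup E] [Module K E]
    (d : ℕ) (σ : Equiv.Perm (Fin d)) :
    (⨂[K] (_ : Fin d), E) ≃ₗ[K] ⨂[K] (_ : Fin d), E :=
  PiTensorProduct.reindex K (fun _ : Fin d => E) σ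

/-- The permutation of `Fin d` induced by `σ ∈ W_d`. -/
def rAct {K : Type*} [CommRing K] (S : OmegaSeq K) (d : ℕ) (σ : S.W d) :
    Equiv.Perm (Fin d) :=
  restrictFin (σ : Equiv.Perm ℕ) (S.W_le d σ.2)

/-- The submodule `_{χ_d⁻¹}T^d(E)` of `T^d(E)`, generated by the elements
`χ_d⁻¹(σ) z − σ z`, `σ ∈ W_d`. -/
def seqKer {K : Type*} [CommRing K] (S : OmegaSeq K)
    (E : Type*) [AddCommGroup E] [Module K E] (d : ℕ) :
    Submodule K (⨂[K] (_ : Fin d), E) :=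
  Submodule.span K {w | ∃ (σ : S.W d) (z : ⨂[K] (_ : Fin d), E),
    w = (((S.χ d σ)⁻¹ : Kˣ) : K) • z - permAct K E d (rAct S d σ) z}

/-- The `d`-th semi-symmetric power `[χ_d]^d(E) = T^d(E)/_{χ_d⁻¹}T^d(E)`. -/
abbrev Qpow {K : Type*} [CommRing K] (S : OmegaSeq K)
    (E : Type*) [AddCommGroup E] [Module K E] (d : ℕ) :=
  (⨂[K] (_ : Fin d), E) ⧸ seqKer S E d

/-- The semi-symmetric algebra `[χ](E) = ⨁_{d ≥ 0} [χ_d]^d(E)` of weight `χ`,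
as a graded `K`-module. -/
abbrev SemiAlg {K : Type*} [CommRing K] (S : OmegaSeq K)
    (E : Type*) [AddCommGroup E] [Module K E] :=
  ⨁ d : ℕ, Qpow S E d

/-- The decomposable `d-χ`-vector `x₁ χ ⋯ χ x_d` as an element of the
semi-symmetric algebra. -/
def decEl {K : Type*} [CommRing K] (S : OmegaSeq K)
    {E : Type*} [AddCommGroup E] [Module K E] (d : ℕ) (x : Fin d → E) :
    SemiAlg S E :=
  DirectSum.lof K ℕ (fun d => Qpow S E d) d
    (Submodule.Quotient.mk (PiTensorProduct.tprod K x))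

/-- Strict lexicographic comparison of functions. -/
def lexLT {ι : Type*} [LT ι] {α : Type*} [LT α] (f g : ι → α) : Prop :=
  Pi.Lex (· < ·) (fun {_} => (· < ·)) f g

/-- The multi-index `i ∈ [1,n]^d` lies in `I(χ_d,n,d)`: the character `χ_d`
is trivial on the stabilizer `W_i` (for the action `(σ i)_t = i_{σ⁻¹(t)}`). -/
def seqStabTriv {K : Type*} [CommRing K] (S : OmegaSeq K) (n d : ℕ)
    (i : Fin d → Fin n) : Prop :=
  ∀ σ : S.W d, i ∘ ⇑((rAct S d σ)⁻¹) = i → S.χ d σ = 1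

/-- The set `J(χ_d,n,d)` of multi-indices in `I(χ_d,n,d)` that are
lexicographically minimal in their `W_d`-orbit. -/
def seqJset {K : Type*} [CommRing K] (S : OmegaSeq K) (n d : ℕ) :
    Set (Fin d → Fin n) :=
  {i | seqStabTriv S n d i ∧ ∀ σ : S.W d, ¬ lexLT (i ∘ ⇑((rAct S d σ)⁻¹)) i}

/-! ### Auxiliary lemmas -/

namespace SemiAlgAux

open PiTensorProduct

variable {K : Type*} [CommRing K] (S : OmegaSeq K) (d : ℕ)

lemma rAct_mul (σ τ : S.W d) : rAct S d (σ * τ) = rAct S d σ * rAct S d τ := by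
  ext x
  rfl

lemma rAct_one : rAct S d (1 : S.W d) = 1 := by
  ext x
  rfl

lemma rAct_inv (σ : S.W d) : rAct S d σ⁻¹ = (rAct S d σ)⁻¹ := by
  ext x
  rfl

section act

variable {α : Type*}

lemma act_mul (σ τ : S.W d) (i : Fin d → α) :
    i ∘ ⇑((rAct S d (σ * τ))⁻¹) = (i ∘ ⇑((rAct S d τ)⁻¹)) ∘ ⇑((rAct S d σ)⁻¹) := by
  funext x
  simp [rAct_mul, mul_inv_rev, Function.comp, Equiv.Perm.mul_apply]

lemma act_one (i : Fin d → α) : i ∘ ⇑((rAct S d (1 : S.W d))⁻¹) = i := by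
  funext x
  simp [rAct_one]

lemma act_fix_inv (σ : S.W d) (i : Fin d → α) (h : i ∘ ⇑((rAct S d σ)⁻¹) = i) :
    i ∘ ⇑((rAct S d σ⁻¹)⁻¹) = i := by
  calc i ∘ ⇑((rAct S d σ⁻¹)⁻¹)
      = (i ∘ ⇑((rAct S d σ)⁻¹)) ∘ ⇑((rAct S d σ⁻¹)⁻¹) := by rw [h]
    _ = i ∘ ⇑((rAct S d (σ⁻¹ * σ))⁻¹) := (act_mul S d σ⁻¹ σ i).symm
    _ = i := by rw [inv_mul_cancel]; exact act_one S d i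

end act

lemma rAct_injective : Function.Injective (rAct S d) := by
  intro σ τ h
  apply Subtype.ext
  apply Equiv.ext
  intro m
  by_cases hm : m < d
  · have := congrArg (fun π : Equiv.Perm (Fin d) => ((π ⟨m, hm⟩ : Fin d) : ℕ)) h
    simpa [rAct, restrictFin] using this
  · have hσ : ∀ m', d ≤ m' → (σ : Equiv.Perm ℕ) m' = m' := S.W_le d σ.2
    have hτ : ∀ m', d ≤ m' → (τ : Equiv.Perm ℕ) m' = m' := S.W_le d τ.2
    rw [hσ m (le_of_not_gt hm), hτ m (le_of_not_gt hm)]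

noncomputable instance : Fintype (S.W d) :=
  Fintype.ofInjective (rAct S d) (rAct_injective S d)

variable {E : Type*} [AddCommGroup E] [Module K E]

lemma permAct_tprod (π : Equiv.Perm (Fin d)) (x : Fin d → E) :
    permAct K E d π (tprod K x) = tprod K (fun t => x (π⁻¹ t)) :=
  PiTensorProduct.reindex_tprod (R := K) (s := fun _ : Fin d => E) π x

variable {n : ℕ} (b : Module.Basis (Fin n) K E)

lemma permAct_tprod_basis (σ : S.W d) (i : Fin d → Fin n) :
    permAct K E d (rAct S d σ) (tprod K fun t => b (i t))
      = tprod K fun t => b ((i ∘ ⇑((rAct S d σ)⁻¹)) t) := by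
  rw [permAct_tprod]
  rfl

lemma mk_rel (σ : S.W d) (i : Fin d → Fin n) :
    (Submodule.Quotient.mk (tprod K fun t => b (i t)) : Qpow S E d)
      = ((S.χ d σ : Kˣ) : K) •
        (Submodule.Quotient.mk (tprod K fun t => b ((i ∘ ⇑((rAct S d σ)⁻¹)) t)) : Qpow S E d) := by
  rw [← Submodule.Quotient.mk_smul, Submodule.Quotient.eq]
  have hgen : ((((S.χ d σ)⁻¹ : Kˣ) : K) • (tprod K fun t => b (i t)) -
      permAct K E d (rAct S d σ) (tprod K fun t => b (i t))) ∈ seqKer S E d :=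
    Submodule.subset_span ⟨σ, tprod K fun t => b (i t), rfl⟩
  have h2 := Submodule.smul_mem (seqKer S E d) ((S.χ d σ : Kˣ) : K) hgen
  have h3 : ((tprod K fun t => b (i t)) -
      ((S.χ d σ : Kˣ) : K) • (tprod K fun t => b ((i ∘ ⇑((rAct S d σ)⁻¹)) t)))
      = ((S.χ d σ : Kˣ) : K) • ((((S.χ d σ)⁻¹ : Kˣ) : K) • (tprod K fun t => b (i t)) -
          permAct K E d (rAct S d σ) (tprod K fun t => b (i t))) := by
    rw [permAct_tprod_basis S d b σ i, smul_sub, smul_smul, ← Units.val_mul, mul_inv_cancel,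
      Units.val_one, one_smul]
  rw [h3]
  exact h2

lemma mem_seqKer_of_not_stabTriv [Algebra ℚ K] [IsDomain K] (i : Fin d → Fin n)
    (hi : ¬ seqStabTriv S n d i) :
    (tprod K fun t => b (i t)) ∈ seqKer S E d := by
  classical
  set z : ⨂[K] (_ : Fin d), E := tprod K fun t => b (i t) with hz
  obtain ⟨σ₀, hfix₀, hne₀⟩ : ∃ σ : S.W d, i ∘ ⇑((rAct S d σ)⁻¹) = i ∧ S.χ d σ ≠ 1 := by
    by_contra hc
    push_neg at hc
    exact hi fun σ h => hc σ h
  set H : Finset (S.W d) := Finset.univ.filter (fun σ => i ∘ ⇑((rAct S d σ)⁻¹) = i) with hH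
  have memH : ∀ σ : S.W d, σ ∈ H ↔ i ∘ ⇑((rAct S d σ)⁻¹) = i := by
    intro σ
    simp [hH]
  have hmulH : ∀ σ τ : S.W d, σ ∈ H → τ ∈ H → σ * τ ∈ H := by
    intro σ τ hσ hτ
    rw [memH] at *
    rw [act_mul, hτ, hσ]
  have hinvH : ∀ σ : S.W d, σ ∈ H → σ⁻¹ ∈ H := by
    intro σ hσ
    rw [memH] at *
    exact act_fix_inv S d σ i hσ
  have hσ₀H : σ₀ ∈ H := (memH σ₀).2 hfix₀
  -- the character sum over the stabilizer vanishes
  have hsum0 : (∑ σ ∈ H, ((S.χ d σ : Kˣ) : K)) = 0 := by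
    have hmul : ((S.χ d σ₀ : Kˣ) : K) * (∑ σ ∈ H, ((S.χ d σ : Kˣ) : K))
        = ∑ σ ∈ H, ((S.χ d σ : Kˣ) : K) := by
      rw [Finset.mul_sum]
      refine Finset.sum_nbij' (fun σ => σ₀ * σ) (fun σ => σ₀⁻¹ * σ) ?_ ?_ ?_ ?_ ?_
      · intro σ hσ; exact hmulH _ _ hσ₀H hσ
      · intro σ hσ; exact hmulH _ _ (hinvH _ hσ₀H) hσ
      · intro σ _; simp [← mul_assoc]
      · intro σ _; simp [← mul_assoc]
      · intro σ _; rw [← Units.val_mul, ← _root_.map_mul]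
    have h2 : (((S.χ d σ₀ : Kˣ) : K) - 1) * (∑ σ ∈ H, ((S.χ d σ : Kˣ) : K)) = 0 := by
      rw [sub_mul, one_mul, hmul, sub_self]
    rcases mul_eq_zero.mp h2 with h | h
    · exfalso
      apply hne₀
      have h1 : ((S.χ d σ₀ : Kˣ) : K) = 1 := by linear_combination h
      exact Units.ext (by simpa using h1)
    · exact h
  -- the averaged element lies in the kernel submodule
  have hmem : (∑ σ ∈ H, ((S.χ d σ : Kˣ) : K) •
      (((((S.χ d σ)⁻¹ : Kˣ) : K)) • z - permAct K E d (rAct S d σ) z)) ∈ seqKer S E d :=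
    Submodule.sum_mem _ fun σ _ =>
      Submodule.smul_mem _ _ (Submodule.subset_span ⟨σ, z, rfl⟩)
  have hterm : ∀ σ ∈ H, ((S.χ d σ : Kˣ) : K) •
      (((((S.χ d σ)⁻¹ : Kˣ) : K)) • z - permAct K E d (rAct S d σ) z)
      = z - ((S.χ d σ : Kˣ) : K) • z := by
    intro σ hσ
    have hfix : permAct K E d (rAct S d σ) z = z := by
      rw [hz, permAct_tprod_basis S d b σ i, (memH σ).1 hσ]
    rw [hfix, smul_sub, smul_smul, ← Units.val_mul, mul_inv_cancel, Units.val_one, one_smul]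
  rw [Finset.sum_congr rfl hterm, Finset.sum_sub_distrib, Finset.sum_const, ← Finset.sum_smul,
    hsum0, zero_smul, sub_zero] at hmem
  have hcard : (H.card : ℚ) ≠ 0 := by
    exact_mod_cast Finset.card_ne_zero_of_mem hσ₀H
  have hzz : z = algebraMap ℚ K (H.card : ℚ)⁻¹ • (H.card • z) := by
    rw [← Nat.cast_smul_eq_nsmul K, smul_smul]
    have : (H.card : K) = algebraMap ℚ K (H.card : ℚ) := by
      simp
    rw [this, ← _root_.map_mul, inv_mul_cancel₀ hcard, _root_.map_one, one_smul]
  rw [hzz]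
  exact Submodule.smul_mem _ _ hmem

/-- Two lexicographically minimal elements of the same orbit coincide. -/
lemma lex_min_unique {f g : Fin d → Fin n} (h1 : ¬ lexLT f g) (h2 : ¬ lexLT g f) : f = g := by
  have : IsTrichotomous (Lex (Fin d → Fin n)) (· < ·) :=
    ⟨(Pi.isTrichotomous_lex _ _ IsWellFounded.wf).1⟩
  rcases lt_trichotomy (toLex f) (toLex g) with h | h | h
  · exact absurd h h1
  · exact congrArg ofLex h
  · exact absurd h h2

section coeff

variable {M : Type*} [AddCommGroup M] [Module K M]

/-- The multilinear map expanding arguments in the basis `b` and evaluating `g`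
on the resulting multi-indices. -/
noncomputable def coeffML (g : (Fin d → Fin n) → M) :
    MultilinearMap K (fun _ : Fin d => E) M where
  toFun x := ∑ i : Fin d → Fin n, (∏ t, b.repr (x t) (i t)) • g i
  map_update_add' := by
    intro _ x t y₁ y₂
    rw [← Finset.sum_add_distrib]
    refine Finset.sum_congr rfl fun i _ => ?_
    rw [← add_smul]
    congr 1
    have h1 : ∀ y : E, (∏ t', b.repr (Function.update x t y t') (i t'))
        = b.repr y (i t) * ∏ t' ∈ Finset.univ.erase t, b.repr (x t') (i t') := by
      intro y
      rw [← Finset.mul_prod_erase Finset.univ _ (Finset.mem_univ t)]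
      congr 1
      · rw [Function.update_self]
      · refine Finset.prod_congr rfl fun t' ht' => ?_
        rw [Function.update_of_ne (Finset.ne_of_mem_erase ht')]
    rw [h1, h1, h1, map_add, Finsupp.add_apply, add_mul]
  map_update_smul' := by
    intro _ x t c y
    rw [Finset.smul_sum]
    refine Finset.sum_congr rfl fun i _ => ?_
    rw [smul_smul]
    congr 1
    have h1 : ∀ y : E, (∏ t', b.repr (Function.update x t y t') (i t'))
        = b.repr y (i t) * ∏ t' ∈ Finset.univ.erase t, b.repr (x t') (i t') := by
      intro y
      rw [← Finset.mul_prod_erase Finset.univ _ (Finset.mem_univ t)]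
      congr 1
      · rw [Function.update_self]
      · refine Finset.prod_congr rfl fun t' ht' => ?_
        rw [Function.update_of_ne (Finset.ne_of_mem_erase ht')]
    rw [h1, h1, map_smul, Finsupp.smul_apply, smul_eq_mul, mul_assoc]

lemma lift_coeffML_tprod_basis (g : (Fin d → Fin n) → M) (j : Fin d → Fin n) :
    PiTensorProduct.lift (coeffML d b g) (tprod K fun t => b (j t)) = g j := by
  classical
  rw [PiTensorProduct.lift.tprod]
  show (∑ i : Fin d → Fin n, (∏ t, b.repr (b (j t)) (i t)) • g i) = g j
  rw [Finset.sum_eq_single j]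
  · have : (∏ t, b.repr (b (j t)) (j t)) = 1 := by
      refine Finset.prod_eq_one fun t _ => ?_
      simp [Module.Basis.repr_self]
    rw [this, one_smul]
  · intro i _ hij
    have : ∃ t, j t ≠ i t := by
      by_contra hc
      push_neg at hc
      exact hij (funext fun t => (hc t).symm)
    obtain ⟨t, ht⟩ := this
    have hzero : b.repr (b (j t)) (i t) = 0 := by
      rw [Module.Basis.repr_self, Finsupp.single_apply, if_neg ht]
    rw [Finset.prod_eq_zero (Finset.mem_univ t) hzero, zero_smul]
  · intro h
    exact absurd (Finset.mem_univ j) h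

end coeff

lemma span_tprod_basis :
    ⊤ ≤ Submodule.span K (Set.range fun i : Fin d → Fin n =>
      (tprod K fun t => b (i t) : ⨂[K] (_ : Fin d), E)) := by
  classical
  rw [← PiTensorProduct.span_tprod_eq_top (R := K) (s := fun _ : Fin d => E), Submodule.span_le]
  rintro x ⟨f, rfl⟩
  have hf : (tprod K f : ⨂[K] (_ : Fin d), E)
      = ∑ r : Fin d → Fin n, (∏ t, b.repr (f t) (r t)) • tprod K fun t => b (r t) := by
    have hexp : ∀ t : Fin d, f t = ∑ ℓ : Fin n, b.repr (f t) ℓ • b ℓ := by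
      intro t
      rw [b.sum_repr (f t)]
    conv_lhs => rw [funext hexp]
    rw [(tprod K (s := fun _ : Fin d => E)).map_sum]
    refine Finset.sum_congr rfl fun r _ => ?_
    rw [MultilinearMap.map_smul_univ]
  rw [hf]
  exact Submodule.sum_smul_mem _ _ fun r _ => Submodule.subset_span ⟨r, rfl⟩

section Jset

variable {E : Type*} [AddCommGroup E] [Module K E] {n : ℕ} (b : Module.Basis (Fin n) K E)

lemma mem_J_act_eq (n : ℕ) (j : Fin d → Fin n) (hj : j ∈ seqJset S n d) (σ : S.W d)
    (h : (j ∘ ⇑((rAct S d σ)⁻¹)) ∈ seqJset S n d) : j ∘ ⇑((rAct S d σ)⁻¹) = j := by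
  refine lex_min_unique d ?_ ?_
  · exact hj.2 σ
  · have h2 := h.2 σ⁻¹
    rw [← act_mul, inv_mul_cancel, act_one] at h2
    exact h2

open Classical in
/-- The invariant "leading coefficient" function underlying the projection onto
the span of the `e_j`, `j ∈ J`. -/
noncomputable def gJ (n : ℕ) (i : Fin d → Fin n) :
    ({j : Fin d → Fin n // j ∈ seqJset S n d} →₀ K) :=
  ∑ σ : S.W d, ((S.χ d σ : Kˣ) : K) •
    (if h : (i ∘ ⇑((rAct S d σ)⁻¹)) ∈ seqJset S n d
      then Finsupp.single (⟨_, h⟩ : {j : Fin d → Fin n // j ∈ seqJset S n d}) (1 : K) else 0)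

lemma gJ_rel (n : ℕ) (τ : S.W d) (i : Fin d → Fin n) :
    gJ S d n (i ∘ ⇑((rAct S d τ)⁻¹)) = (((S.χ d τ)⁻¹ : Kˣ) : K) • gJ S d n i := by
  classical
  unfold gJ
  rw [Finset.smul_sum]
  refine Fintype.sum_equiv (Equiv.mulRight τ) _ _ ?_
  intro σ
  have hprop : (i ∘ ⇑((rAct S d τ)⁻¹)) ∘ ⇑((rAct S d σ)⁻¹) = i ∘ ⇑((rAct S d (σ * τ))⁻¹) :=
    (act_mul S d σ τ i).symm
  have hval : (((S.χ d τ)⁻¹ : Kˣ) : K) * ((S.χ d (σ * τ) : Kˣ) : K) = ((S.χ d σ : Kˣ) : K) := by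
    rw [← Units.val_mul, _root_.map_mul, mul_comm (S.χ d σ), ← mul_assoc, inv_mul_cancel, one_mul]
  rw [hprop]
  simp only [Equiv.coe_mulRight]
  show ((S.χ d σ : Kˣ) : K) • _ = (((S.χ d τ)⁻¹ : Kˣ) : K) • (((S.χ d (σ * τ) : Kˣ) : K) • _)
  rw [smul_smul, hval]
  rfl

/-- The order of the stabilizer of a multi-index. -/
noncomputable def stabCard (n : ℕ) (j : Fin d → Fin n) : ℕ := by
  classical
  exact (Finset.univ.filter (fun σ : S.W d => j ∘ ⇑((rAct S d σ)⁻¹) = j)).card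

lemma stabCard_ne_zero (n : ℕ) (j : Fin d → Fin n) : stabCard S d n j ≠ 0 := by
  classical
  have h1 : (1 : S.W d) ∈ Finset.univ.filter (fun σ : S.W d => j ∘ ⇑((rAct S d σ)⁻¹) = j) := by
    simp only [Finset.mem_filter, Finset.mem_univ, true_and]
    exact act_one S d j
  have := Finset.card_ne_zero_of_mem h1
  simpa [stabCard] using this

lemma gJ_self (n : ℕ) (j : Fin d → Fin n) (hj : j ∈ seqJset S n d) :
    gJ S d n j = stabCard S d n j •
      Finsupp.single (⟨j, hj⟩ : {j : Fin d → Fin n // j ∈ seqJset S n d}) (1 : K) := by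
  classical
  unfold gJ
  have hterm : ∀ σ : S.W d, ((S.χ d σ : Kˣ) : K) •
      (if h : (j ∘ ⇑((rAct S d σ)⁻¹)) ∈ seqJset S n d
        then Finsupp.single (⟨_, h⟩ : {j : Fin d → Fin n // j ∈ seqJset S n d}) (1 : K) else 0)
      = if j ∘ ⇑((rAct S d σ)⁻¹) = j
        then Finsupp.single (⟨j, hj⟩ : {j : Fin d → Fin n // j ∈ seqJset S n d}) (1 : K) else 0 := by
    intro σ
    by_cases hfix : j ∘ ⇑((rAct S d σ)⁻¹) = j
    · have hmem : (j ∘ ⇑((rAct S d σ)⁻¹)) ∈ seqJset S n d := by rw [hfix]; exact hj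
      have hχ : S.χ d σ = 1 := hj.1 σ hfix
      have hsub : (⟨j ∘ ⇑((rAct S d σ)⁻¹), hmem⟩ : {j : Fin d → Fin n // j ∈ seqJset S n d})
          = ⟨j, hj⟩ := Subtype.ext hfix
      rw [if_pos hfix, dif_pos hmem, hsub, hχ, Units.val_one, one_smul]
    · have hnot : ¬ ((j ∘ ⇑((rAct S d σ)⁻¹)) ∈ seqJset S n d) := fun hmem =>
        hfix (mem_J_act_eq S d n j hj σ hmem)
      rw [if_neg hfix, dif_neg hnot, smul_zero]
  rw [Finset.sum_congr rfl fun σ _ => hterm σ, ← Finset.sum_filter, Finset.sum_const, stabCard]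

variable [Algebra ℚ K] [IsDomain K]

/-- The projection `T^d(E) → (J →₀ K)` used to prove linear independence. -/
noncomputable def projP : (⨂[K] (_ : Fin d), E) →ₗ[K]
    ({j : Fin d → Fin n // j ∈ seqJset S n d} →₀ K) :=
  PiTensorProduct.lift (coeffML d b (gJ S d n))

lemma projP_tprod (i : Fin d → Fin n) :
    projP S d b (tprod K fun t => b (i t)) = gJ S d n i :=
  lift_coeffML_tprod_basis d b (gJ S d n) i

lemma seqKer_le_ker : seqKer S E d ≤ LinearMap.ker (projP S d b) := by
  have hcomm : ∀ σ : S.W d, ∀ z : ⨂[K] (_ : Fin d), E,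
      projP S d b (permAct K E d (rAct S d σ) z) = (((S.χ d σ)⁻¹ : Kˣ) : K) • projP S d b z := by
    intro σ
    have heq : (projP S d b).comp (permAct K E d (rAct S d σ)).toLinearMap
        = (((S.χ d σ)⁻¹ : Kˣ) : K) • projP S d b := by
      apply LinearMap.ext_on (le_antisymm le_top (span_tprod_basis d b))
      rintro x ⟨i, rfl⟩
      rw [LinearMap.comp_apply, LinearMap.smul_apply, LinearEquiv.coe_toLinearMap,
        permAct_tprod_basis S d b σ i, projP_tprod, projP_tprod, gJ_rel]
    intro z
    have := congrArg (fun f : (⨂[K] (_ : Fin d), E) →ₗ[K] _ => f z) heq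
    simpa using this
  rw [seqKer, Submodule.span_le]
  rintro w ⟨σ, z, rfl⟩
  rw [SetLike.mem_coe, LinearMap.mem_ker, map_sub, LinearMap.map_smul, hcomm σ z, sub_self]

/-- The family of classes of basis decomposables indexed by `J`. -/
noncomputable def vFam : {j : Fin d → Fin n // j ∈ seqJset S n d} → Qpow S E d :=
  fun j => Submodule.Quotient.mk (tprod K fun t => b (j.1 t))

/-- A nonzero natural number is a unit in a `ℚ`-algebra. -/
noncomputable def natUnit (m : ℕ) (hm : m ≠ 0) : Kˣ where
  val := (m : K)
  inv := algebraMap ℚ K (m : ℚ)⁻¹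
  val_inv := by
    have h1 : ((m : ℕ) : K) = algebraMap ℚ K (m : ℚ) := by simp
    rw [h1, ← _root_.map_mul, mul_inv_cancel₀ (by exact_mod_cast hm), _root_.map_one]
  inv_val := by
    have h1 : ((m : ℕ) : K) = algebraMap ℚ K (m : ℚ) := by simp
    rw [h1, ← _root_.map_mul, inv_mul_cancel₀ (by exact_mod_cast hm), _root_.map_one]

lemma vFam_linearIndependent : LinearIndependent K (vFam S d b) := by
  classical
  rw [linearIndependent_iff']
  intro s g hsum i₀ hi₀
  have h0 := congrArg (Submodule.liftQ _ (projP S d b) (seqKer_le_ker S d b)) hsum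
  rw [map_sum, map_zero] at h0
  have hterm : ∀ j : {j : Fin d → Fin n // j ∈ seqJset S n d},
      Submodule.liftQ _ (projP S d b) (seqKer_le_ker S d b) (g j • vFam S d b j)
        = g j • (stabCard S d n j.1 • Finsupp.single j (1 : K)) := by
    intro j
    rw [map_smul]
    congr 1
    show Submodule.liftQ _ (projP S d b) (seqKer_le_ker S d b)
        (Submodule.Quotient.mk (tprod K fun t => b (j.1 t))) = _
    rw [Submodule.liftQ_apply, projP_tprod, gJ_self S d n j.1 j.2]
  rw [Finset.sum_congr rfl fun j _ => hterm j] at h0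
  have h1 := congrArg (fun φ : ({j : Fin d → Fin n // j ∈ seqJset S n d} →₀ K) => φ i₀) h0
  simp only [Finset.sum_apply', Finsupp.coe_zero, Pi.zero_apply] at h1
  rw [Finset.sum_eq_single i₀ ?_ ?_] at h1
  · rw [Finsupp.smul_apply, Finsupp.smul_apply, Finsupp.single_eq_same, smul_eq_mul] at h1
    have hcast : (stabCard S d n i₀.1) • (1 : K) = ((stabCard S d n i₀.1 : ℕ) : K) := by
      rw [nsmul_eq_mul, mul_one]
    rw [hcast] at h1
    rcases mul_eq_zero.mp h1 with h | h
    · exact h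
    · have hu := Units.ne_zero (natUnit (K := K) (stabCard S d n i₀.1) (stabCard_ne_zero S d n i₀.1))
      exact absurd h hu
  · intro j _ hji
    rw [Finsupp.smul_apply, Finsupp.smul_apply, Finsupp.single_eq_of_ne hji.symm, smul_zero,
      smul_zero]
  · intro hns
    exact absurd hi₀ hns

lemma vFam_span : ⊤ ≤ Submodule.span K (Set.range (vFam S d b)) := by
  have hwf : WellFounded (fun f g : Fin d → Fin n => lexLT f g) := by
    have : Finite (Lex (Fin d → Fin n)) := Finite.of_equiv _ (toLex : (Fin d → Fin n) ≃ _)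
    exact Finite.wellFounded_of_trans_of_irrefl (α := Lex (Fin d → Fin n)) (· < ·)
  have key : ∀ i : Fin d → Fin n,
      (Submodule.Quotient.mk (tprod K fun t => b (i t)) : Qpow S E d) ∈
        Submodule.span K (Set.range (vFam S d b)) := by
    intro i
    induction i using hwf.induction with
    | _ i IH =>
      by_cases hJ : i ∈ seqJset S n d
      · exact Submodule.subset_span ⟨⟨i, hJ⟩, rfl⟩
      by_cases hTriv : seqStabTriv S n d i
      · have hex : ∃ σ : S.W d, lexLT (i ∘ ⇑((rAct S d σ)⁻¹)) i := by
          by_contra hc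
          push_neg at hc
          exact hJ ⟨hTriv, hc⟩
        obtain ⟨σ, hσ⟩ := hex
        rw [mk_rel S d b σ i]
        exact Submodule.smul_mem _ _ (IH _ hσ)
      · have h0 : (Submodule.Quotient.mk (tprod K fun t => b (i t)) : Qpow S E d) = 0 :=
          (Submodule.Quotient.mk_eq_zero _).mpr (mem_seqKer_of_not_stabTriv S d b i hTriv)
        rw [h0]
        exact Submodule.zero_mem _
  intro x _
  obtain ⟨y, rfl⟩ := Submodule.Quotient.mk_surjective (seqKer S E d) x
  have hy : y ∈ Submodule.span K (Set.range fun i : Fin d → Fin n =>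
      (tprod K fun t => b (i t) : ⨂[K] (_ : Fin d), E)) := span_tprod_basis d b trivial
  have hmk := Submodule.apply_mem_span_image_of_mem_span (seqKer S E d).mkQ hy
  refine Submodule.span_le.mpr ?_ hmk
  rintro w ⟨w', ⟨i, rfl⟩, rfl⟩
  exact key i

/-- The basis of the `d`-th semi-symmetric power given by the classes of
`e_j`, `j ∈ J(χ_d,n,d)`. -/
noncomputable def qBasis : Module.Basis {j : Fin d → Fin n // j ∈ seqJset S n d} K (Qpow S E d) :=
  Module.Basis.mk (vFam_linearIndependent S d b) (vFam_span S d b)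

lemma qBasis_apply (j : {j : Fin d → Fin n // j ∈ seqJset S n d}) :
    qBasis S d b j = Submodule.Quotient.mk (tprod K fun t => b (j.1 t)) :=
  Module.Basis.mk_apply _ _ _

end Jset

lemma dfinsupp_basis_apply {ι : Type*} [DecidableEq ι] {M : ι → Type*}
    [∀ i, AddCommGroup (M i)] [∀ i, Module K (M i)] {η : ι → Type*}
    (bs : ∀ i, Module.Basis (η i) K (M i)) (p : Σ i, η i) :
    DFinsupp.basis bs p = DFinsupp.single p.1 (bs p.1 p.2) := by
  apply Module.Basis.apply_eq_iff.mpr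
  show ((DFinsupp.mapRange.linearEquiv fun i => (bs i).repr) ≪≫ₗ
      (sigmaFinsuppLequivDFinsupp K).symm) (DFinsupp.single p.1 (bs p.1 p.2))
    = Finsupp.single p 1
  rw [LinearEquiv.trans_apply, LinearEquiv.symm_apply_eq]
  erw [DFinsupp.mapRange.linearEquiv_apply]
  rw [DFinsupp.mapRange_single, Module.Basis.repr_self]
  simp only [sigmaFinsuppLequivDFinsupp_apply, sigmaFinsuppAddEquivDFinsupp_apply,
    sigmaFinsuppEquivDFinsupp_single]
  exact (sigmaFinsuppEquivDFinsupp_single p (1 : K)).symm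

end SemiAlgAux
/-- Corollary II.10. Suppose `K` is a `ℚ`-algebra and an
integral domain, `χ` is `ω`-invariant and `E` is free with basis
`(e_ℓ)_{ℓ=1}^n`. Then (i) `(e_j)_{j ∈ J(χ,n)}` is a basis of the
semi-symmetric algebra `[χ](E)`; (ii) for `j ∈ J(χ_d,n,d)`,
`k ∈ J(χ_e,n,e)`, the multiplication (= concatenation of decomposables)
satisfies `e_j · e_k = 0` if `(j,k) ∈ I₀(χ_{d+e},n,d+e)` and
`e_j · e_k = ζ(j,k) e_{ℓm(j,k)}` if `(j,k) ∈ I(χ_{d+e},n,d+e)`. -/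
theorem semiAlg_basis_and_mul {K : Type*} [CommRing K] [Algebra ℚ K] [IsDomain K]
    (S : OmegaSeq K) {E : Type*} [AddCommGroup E] [Module K E]
    {n : ℕ} (b : Module.Basis (Fin n) K E)
    (mul : SemiAlg S E →ₗ[K] SemiAlg S E →ₗ[K] SemiAlg S E)
    (hmul : ∀ (d e : ℕ) (u : Fin d → E) (v : Fin e → E),
      mul (decEl S d u) (decEl S e v) = decEl S (d + e) (Fin.append u v)) :
    (∃ B : Module.Basis (Σ d : ℕ, {j : Fin d → Fin n // j ∈ seqJset S n d}) K (SemiAlg S E),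
      ∀ p, B p = decEl S p.1 (fun t => b (p.2.1 t))) ∧
    (∀ (d e : ℕ) (j : Fin d → Fin n) (k : Fin e → Fin n),
      j ∈ seqJset S n d → k ∈ seqJset S n e →
      (¬ seqStabTriv S n (d + e) (Fin.append j k) →
        mul (decEl S d (fun t => b (j t))) (decEl S e (fun t => b (k t))) = 0) ∧
      (seqStabTriv S n (d + e) (Fin.append j k) →
        ∀ (σ : S.W (d + e)) (i' : Fin (d + e) → Fin n),
          Fin.append j k ∘ ⇑((rAct S (d + e) σ)⁻¹) = i' →
          (∀ τ : S.W (d + e), ¬ lexLT (i' ∘ ⇑((rAct S (d + e) τ)⁻¹)) i') →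
          mul (decEl S d (fun t => b (j t))) (decEl S e (fun t => b (k t)))
            = ((S.χ (d + e) σ : Kˣ) : K) • decEl S (d + e) (fun t => b (i' t)))) := by
  classical
  constructor
  · refine ⟨DFinsupp.basis (fun d => SemiAlgAux.qBasis S d b), fun p => ?_⟩
    refine (SemiAlgAux.dfinsupp_basis_apply (fun d => SemiAlgAux.qBasis S d b) p).trans ?_
    rw [SemiAlgAux.qBasis_apply]
    rfl
  · intro d e j k hj hk
    have happ : Fin.append (fun t => b (j t)) (fun t => b (k t))
        = fun t => b (Fin.append j k t) := by
      funext t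
      refine Fin.addCases (fun t₁ => ?_) (fun t₁ => ?_) t
      · rw [Fin.append_left, Fin.append_left]
      · rw [Fin.append_right, Fin.append_right]
    constructor
    · intro hns
      rw [hmul d e, happ]
      show DirectSum.lof K ℕ (fun d => Qpow S E d) (d + e)
        (Submodule.Quotient.mk (PiTensorProduct.tprod K fun t => b (Fin.append j k t))) = 0
      rw [(Submodule.Quotient.mk_eq_zero _).mpr
        (SemiAlgAux.mem_seqKer_of_not_stabTriv S (d + e) b (Fin.append j k) hns), map_zero]
    · intro _ σ i' hact _
      rw [hmul d e, happ]
      show DirectSum.lof K ℕ (fun d => Qpow S E d) (d + e)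
          (Submodule.Quotient.mk (PiTensorProduct.tprod K fun t => b (Fin.append j k t)))
        = ((S.χ (d + e) σ : Kˣ) : K) • decEl S (d + e) (fun t => b (i' t))
      rw [SemiAlgAux.mk_rel S (d + e) b σ (Fin.append j k), map_smul, hact]
      rfl
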